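/- Let S be a monoid and let C be a set (not a proper class) of S-maps that is closed under coproducts. Let R = C^□ and L = □R. Then (L, R) is a weak factorization system. -/

import Mathlib

universe u

/-- A right `S`-act: a set with a right action of the monoid `S`. -/
structure SAct (S : Type u) [Monoid S] : Type (u + 1) where
  carrier : Type u
  act : carrier → S → carrier
  act_one : ∀ a, act a 1 = a
  act_mul : ∀ a s t, act (act a s) t = act a (s * t)

/-- A map of right `S`-acts. -/
structure SMap {S : Type u} [Monoid S] (A B : SAct S) : Type u where
  toFun : A.carrier → B.carrier
  map_act : ∀ a s, toFun (A.act a s) = B.act (toFun a) s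

namespace SMap

variable {S : Type u} [Monoid S]

/-- Composition of `S`-maps. -/
def comp {A B C : SAct S} (g : SMap B C) (f : SMap A B) : SMap A C :=
  ⟨fun a => g.toFun (f.toFun a), fun a s => by
    show g.toFun (f.toFun (A.act a s)) = C.act (g.toFun (f.toFun a)) s
    rw [f.map_act, g.map_act]⟩

/-- The identity `S`-map. -/
def id (A : SAct S) : SMap A A := ⟨fun a => a, fun _ _ => rfl⟩

end SMap

variable {S : Type u} [Monoid S]

/-- `f` has the left lifting property with respect to `g` (equivalently, `g` has the
right lifting property with respect to `f`). -/
def Lifts {A B C D : SAct S} (f : SMap A B) (g : SMap C D) : Prop :=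
  ∀ (u : SMap A C) (v : SMap B D), g.comp u = v.comp f →
    ∃ h : SMap B C, h.comp f = u ∧ g.comp h = v

/-- A class of `S`-maps. -/
def MapClass (S : Type u) [Monoid S] : Type (u + 1) :=
  ∀ {A B : SAct S}, SMap A B → Prop

/-- `C^□`: the class of maps with the right lifting property with respect to every map of `C`. -/
def rlpC (C : MapClass S) : MapClass S :=
  fun {_ _} g => ∀ {A B : SAct S} (f : SMap A B), C f → Lifts f g

/-- `□C`: the class of maps with the left lifting property with respect to every map of `C`. -/
def llpC (C : MapClass S) : MapClass S :=
  fun {_ _} f => ∀ {C' D : SAct S} (g : SMap C' D), C g → Lifts f g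

/-- `cof(C) = □(C^□)`. -/
def cofC (C : MapClass S) : MapClass S := llpC (rlpC C)

/-- `fib(C) = (□C)^□`. -/
def fibC (C : MapClass S) : MapClass S := rlpC (llpC C)

/-- `(L, R)` is a weak factorization system. -/
structure IsWFS (L R : MapClass S) : Prop where
  rlp_eq : ∀ {A B : SAct S} (g : SMap A B), R g ↔ rlpC L g
  llp_eq : ∀ {A B : SAct S} (f : SMap A B), L f ↔ llpC R f
  factor : ∀ {A B : SAct S} (h : SMap A B),
    ∃ (C : SAct S) (f : SMap A C) (g : SMap C B), L f ∧ R g ∧ g.comp f = h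

/-- `g : A → C` is a retract of `f : A → B`:  there are `α : C → B`, `β : B → C` with
`β ∘ α = 1`, `α ∘ g = f` and `β ∘ f = g`. -/
def RetractOfMap {A B C : SAct S} (g : SMap A C) (f : SMap A B) : Prop :=
  ∃ (α : SMap C B) (β : SMap B C),
    β.comp α = SMap.id C ∧ α.comp g = f ∧ β.comp f = g

/-- The square with sides `f : A → B`, `u : A → X`, `fbar : X → P`, `v : B → P` is a pushout
square (i.e. `fbar` is the pushout of `f` along `u`). -/
structure IsPushoutSq {A B X P : SAct S}
    (f : SMap A B) (u : SMap A X) (fbar : SMap X P) (v : SMap B P) : Prop where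
  comm : fbar.comp u = v.comp f
  ue : ∀ ⦃Q : SAct S⦄ (g' : SMap X Q) (v' : SMap B Q), g'.comp u = v'.comp f →
    ∃! k : SMap P Q, k.comp fbar = g' ∧ k.comp v = v'

/-- The square with sides `pr1 : P → D`, `pr2 : P → A`, `g : A → B`, `v : D → B` is a
pullback square (i.e. `pr1` is the pullback of `g` along `v`). -/
structure IsPullbackSq {P A D B : SAct S}
    (pr1 : SMap P D) (pr2 : SMap P A) (g : SMap A B) (v : SMap D B) : Prop where
  comm : g.comp pr2 = v.comp pr1
  ue : ∀ ⦃Q : SAct S⦄ (q1 : SMap Q D) (q2 : SMap Q A), g.comp q2 = v.comp q1 →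
    ∃! k : SMap Q P, pr1.comp k = q1 ∧ pr2.comp k = q2

/-- `f` is an isomorphism of `S`-acts. -/
def IsIsoMap {A B : SAct S} (f : SMap A B) : Prop :=
  ∃ g : SMap B A, g.comp f = SMap.id A ∧ f.comp g = SMap.id B

/-- A directed system of `S`-acts indexed by the ordinals `< lam`. -/
structure OSeq (S : Type u) [Monoid S] (lam : Ordinal.{u}) where
  obj : ∀ a : Ordinal.{u}, a < lam → SAct S
  map : ∀ (a b : Ordinal.{u}) (hab : a ≤ b) (hb : b < lam),
    SMap (obj a (lt_of_le_of_lt hab hb)) (obj b hb)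
  map_id : ∀ (a : Ordinal.{u}) (ha : a < lam), map a a le_rfl ha = SMap.id (obj a ha)
  map_comp : ∀ (a b c : Ordinal.{u}) (hab : a ≤ b) (hbc : b ≤ c) (hc : c < lam),
    (map b c hbc hc).comp (map a b hab (lt_of_le_of_lt hbc hc)) = map a c (le_trans hab hbc) hc

/-- A cocone over a directed system of `S`-acts indexed by ordinals `< lam`. -/
structure OCocone {lam : Ordinal.{u}} (F : OSeq S lam) where
  pt : SAct S
  ι : ∀ (a : Ordinal.{u}) (ha : a < lam), SMap (F.obj a ha) pt
  fac : ∀ (a b : Ordinal.{u}) (hab : a ≤ b) (hb : b < lam),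
    (ι b hb).comp (F.map a b hab hb) = ι a (lt_of_le_of_lt hab hb)

/-- A cocone is a (directed) colimit if it satisfies the universal property. -/
def IsColimitO {lam : Ordinal.{u}} {F : OSeq S lam} (c : OCocone F) : Prop :=
  ∀ d : OCocone F, ∃! k : SMap c.pt d.pt, ∀ (a : Ordinal.{u}) (ha : a < lam),
    k.comp (c.ι a ha) = d.ι a ha

/-- Restriction of a directed system to the ordinals `< γ`. -/
def OSeq.restrict {lam : Ordinal.{u}} (F : OSeq S lam) (γ : Ordinal.{u}) (hγ : γ ≤ lam) :
    OSeq S γ where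
  obj a ha := F.obj a (lt_of_lt_of_le ha hγ)
  map a b hab hb := F.map a b hab (lt_of_lt_of_le hb hγ)
  map_id a ha := F.map_id a _
  map_comp a b c hab hbc hc := F.map_comp a b c hab hbc _

/-- The cocone over the restriction to `γ` with vertex `F.obj γ`. -/
def OSeq.coconeAt {lam : Ordinal.{u}} (F : OSeq S lam) (γ : Ordinal.{u}) (hγ : γ < lam) :
    OCocone (F.restrict γ hγ.le) where
  pt := F.obj γ hγ
  ι a ha := F.map a γ ha.le hγ
  fac a b hab hb := F.map_comp a b γ hab hb.le hγ

/-- A `λ`-sequence: a directed system of `S`-acts indexed by the ordinals `< λ`, together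
with a directed colimit, which is continuous at every limit ordinal `γ ≤ λ`. -/
structure LambdaSequence (S : Type u) [Monoid S] (lam : Ordinal.{u}) where
  seq : OSeq S lam
  cocone : OCocone seq
  isColimit : IsColimitO cocone
  continuity : ∀ (γ : Ordinal.{u}) (hγ : γ < lam), Order.IsSuccLimit γ →
    IsColimitO (seq.coconeAt γ hγ)

/-- An ordinal `lam` is `γ`-filtered: it is a limit ordinal and every subset of `lam` of
cardinality at most `γ` has supremum `< lam`. -/
def IsGammaFiltered (γ : Cardinal.{u}) (lam : Ordinal.{u}) : Prop :=
  Order.IsSuccLimit lam ∧ ∀ A : Set Ordinal.{u}, A ⊆ Set.Iio lam →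
    Cardinal.mk A ≤ Cardinal.lift.{u + 1} γ → sSup A < lam

/-- A split monomorphism. -/
def SplitMonoM {A B : SAct S} (f : SMap A B) : Prop :=
  ∃ γ : SMap B A, γ.comp f = SMap.id A

/-- A split epimorphism. -/
def SplitEpiM {A B : SAct S} (f : SMap A B) : Prop :=
  ∃ γ : SMap B A, f.comp γ = SMap.id B

/-- A unitary monomorphism of `S`-acts. -/
def IsUnitaryMono {X Y : SAct S} (f : SMap X Y) : Prop :=
  Function.Injective f.toFun ∧
    ∀ (y : Y.carrier) (s : S), Y.act y s ∈ Set.range f.toFun → y ∈ Set.range f.toFun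

/-- The class of unitary monomorphisms. -/
def UnitaryClass (S : Type u) [Monoid S] : MapClass S := fun {_ _} f => IsUnitaryMono f

/-- The class of split epimorphisms. -/
def SplitEpiClass (S : Type u) [Monoid S] : MapClass S := fun {_ _} f => SplitEpiM f

/-- `P` is projective with respect to the map `f : A → B`. -/
def ProjWrt (P : SAct S) {A B : SAct S} (f : SMap A B) : Prop :=
  ∀ g : SMap P B, ∃ h : SMap P A, f.comp h = g

/-- `Q` is a retract of the act `P`. -/
def ActRetract (Q P : SAct S) : Prop :=
  ∃ (α : SMap Q P) (β : SMap P Q), β.comp α = SMap.id Q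

/-- The coproduct (disjoint union) of two `S`-acts. -/
def SAct.coprod (A B : SAct S) : SAct S where
  carrier := A.carrier ⊕ B.carrier
  act x s := Sum.elim (fun a => Sum.inl (A.act a s)) (fun b => Sum.inr (B.act b s)) x
  act_one x := by cases x <;> simp [SAct.act_one]
  act_mul x s t := by cases x <;> simp [SAct.act_mul]

/-- The coproduct (disjoint union) of a family of `S`-acts. -/
def SAct.sigmaCoprod {ι : Type u} (F : ι → SAct S) : SAct S where
  carrier := Σ i, (F i).carrier
  act x s := ⟨x.1, (F x.1).act x.2 s⟩
  act_one x := by cases x with | mk i a => exact congrArg (Sigma.mk i) ((F i).act_one a)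
  act_mul x s t := by cases x with | mk i a => exact congrArg (Sigma.mk i) ((F i).act_mul a s t)

/-- The coproduct of a family of `S`-maps. -/
def coprodMap {ι : Type u} {A B : ι → SAct S} (f : ∀ i, SMap (A i) (B i)) :
    SMap (SAct.sigmaCoprod A) (SAct.sigmaCoprod B) where
  toFun x := ⟨x.1, (f x.1).toFun x.2⟩
  map_act x s := congrArg (Sigma.mk x.1) ((f x.1).map_act x.2 s)

/-- An isomorphism class predicate: `A` and `B` are isomorphic `S`-acts. -/
def ActIso (A B : SAct S) : Prop := ∃ f : SMap A B, Function.Bijective f.toFun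

/-- `B` is a direct summand of `A`. -/
def IsDirectSummand (B A : SAct S) : Prop := ∃ C : SAct S, ActIso (SAct.coprod B C) A

/-- The subact of `Y` on a subset `T` closed under the action. -/
def SAct.sub (Y : SAct S) (T : Set Y.carrier) (hT : ∀ t ∈ T, ∀ s : S, Y.act t s ∈ T) :
    SAct S where
  carrier := {y // y ∈ T}
  act t s := ⟨Y.act t.1 s, hT t.1 t.2 s⟩
  act_one t := Subtype.ext (Y.act_one t.1)
  act_mul t s r := Subtype.ext (Y.act_mul t.1 s r)

/-- A class of `S`-acts. -/
def ActClass (S : Type u) [Monoid S] : Type (u + 1) := SAct S → Prop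

/-- The class `R_X` of maps with respect to which every act of `X` is projective. -/
def RXClass (𝒳 : ActClass S) : MapClass S :=
  fun {_ _} f => ∀ P : SAct S, 𝒳 P → ProjWrt P f

/-- The class `U_X` of unitary monomorphisms `f : X → Y` with `Y ∖ im f ∈ X`. -/
def UXClass (𝒳 : ActClass S) : MapClass S :=
  fun {_ Y} f =>
    ∃ (_ : Function.Injective f.toFun)
      (hu : ∀ (y : Y.carrier) (s : S),
        Y.act y s ∈ Set.range f.toFun → y ∈ Set.range f.toFun),
      𝒳 (Y.sub (Set.range f.toFun)ᶜ (fun t ht s hmem => ht (hu t s hmem)))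

/-- Every `S`-act has an `𝒳`-precover. -/
def HasPrecover (𝒳 : ActClass S) (A : SAct S) : Prop :=
  ∃ (P : SAct S) (g : SMap P A), 𝒳 P ∧
    ∀ ⦃P' : SAct S⦄ (g' : SMap P' A), 𝒳 P' → ∃ f : SMap P' P, g.comp f = g'

/-- A projective `S`-act. -/
def ProjectiveAct (P : SAct S) : Prop :=
  ∀ ⦃A B : SAct S⦄ (f : SMap A B), Function.Surjective f.toFun → ProjWrt P f

/-- The class of all surjective `S`-maps (epimorphisms). -/
def EpiClass (S : Type u) [Monoid S] : MapClass S :=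
  fun {_ _} f => Function.Surjective f.toFun

/-- The free `S`-act on `n` generators. -/
def freeAct (S : Type u) [Monoid S] (n : ℕ) : SAct S where
  carrier := Fin n × S
  act p s := (p.1, p.2 * s)
  act_one p := by simp
  act_mul p s t := by simp [mul_assoc]

/-- `r` is a congruence on the `S`-act `A`. -/
def IsCong (A : SAct S) (r : A.carrier → A.carrier → Prop) : Prop :=
  Equivalence r ∧ ∀ (a b : A.carrier) (s : S), r a b → r (A.act a s) (A.act b s)

/-- A finitely presented `S`-act: a quotient of a finitely generated free act by a
finitely generated congruence. -/
def FinPresented (M : SAct S) : Prop :=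
  ∃ (n : ℕ) (q : SMap (freeAct S n) M), Function.Surjective q.toFun ∧
    ∃ (m : ℕ) (p : Fin m → (freeAct S n).carrier × (freeAct S n).carrier),
      (∀ i, q.toFun (p i).1 = q.toFun (p i).2) ∧
      ∀ r : (freeAct S n).carrier → (freeAct S n).carrier → Prop, IsCong (freeAct S n) r →
        (∀ i, r (p i).1 (p i).2) →
        ∀ x y, q.toFun x = q.toFun y → r x y

/-- A pure epimorphism of `S`-acts. -/
def IsPureEpi {X Y : SAct S} (ψ : SMap X Y) : Prop :=
  Function.Surjective ψ.toFun ∧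
    ∀ (M : SAct S), FinPresented M → ∀ f : SMap M Y, ∃ g : SMap M X, ψ.comp g = f

/-- The class of retracts of coproducts of finitely presented acts. -/
def RIFPClass (S : Type u) [Monoid S] : ActClass S :=
  fun A => ∃ (ι : Type u) (F : ι → SAct S),
    (∀ i, FinPresented (F i)) ∧ ActRetract A (SAct.sigmaCoprod F)

/-- The one-element `S`-act. -/
def oneAct (S : Type u) [Monoid S] : SAct S :=
  ⟨PUnit, fun _ _ => PUnit.unit, fun _ => rfl, fun _ _ _ => rfl⟩

/-- The unique map to the one-element act. -/
def bangMap (A : SAct S) : SMap A (oneAct S) := ⟨fun _ => PUnit.unit, fun _ _ => rfl⟩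

/-- The monoid `S` as a right `S`-act. -/
def regAct (S : Type u) [Monoid S] : SAct S := ⟨S, fun a s => a * s, mul_one, mul_assoc⟩

/-- The set of fixed points of an `S`-act. -/
def FixSet (A : SAct S) : Set A.carrier := {a | ∀ s : S, A.act a s = a}

/-- The Rees quotient of `Y` collapsing the subset `T` (closed under the action) to a point. -/
def reesQuot (Y : SAct S) (T : Set Y.carrier) (hT : ∀ t ∈ T, ∀ s : S, Y.act t s ∈ T) :
    SAct S where
  carrier := Quot (fun a b => a = b ∨ (a ∈ T ∧ b ∈ T))
  act q s := Quot.lift (fun y => Quot.mk _ (Y.act y s))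
    (fun a b hab => by
      rcases hab with h | ⟨ha, hb⟩
      · rw [h]
      · exact Quot.sound (Or.inr ⟨hT a ha s, hT b hb s⟩)) q
  act_one q := by
    induction q using Quot.ind with
    | _ y => exact congrArg (Quot.mk _) (Y.act_one y)
  act_mul q s t := by
    induction q using Quot.ind with
    | _ y => exact congrArg (Quot.mk _) (Y.act_mul y s t)

/-- The class of monomorphisms whose Rees quotient lies in `𝒳`. -/
def XMonoClass (𝒳 : ActClass S) : MapClass S :=
  fun {X Y} f =>
    Function.Injective f.toFun ∧
      𝒳 (reesQuot Y (Set.range f.toFun)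
        (fun t ht s => by
          obtain ⟨x, rfl⟩ := ht
          exact ⟨X.act x s, f.map_act x s⟩))

/-- The type of all `S`-maps (arrows). -/
def ArrowCls (S : Type u) [Monoid S] : Type (u + 1) := Σ (A B : SAct S), SMap A B

/-- The class of pushouts of maps in `𝒞`. -/
def pushoutsOf (𝒞 : MapClass S) : MapClass S :=
  fun {X P} fbar => ∃ (A B : SAct S) (f : SMap A B) (u : SMap A X) (v : SMap B P),
    𝒞 f ∧ IsPushoutSq f u fbar v

/-- `h` is a transfinite composition of maps in `𝒟`. -/
def IsTransfiniteCompOf (𝒟 : MapClass S) {A L : SAct S} (h : SMap A L) : Prop :=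
  ∃ (lam : Ordinal.{u}), Ordinal.omega0 ≤ lam ∧
    ∃ (Φ : LambdaSequence S lam) (h0 : (0 : Ordinal.{u}) < lam),
      (∀ (b : Ordinal.{u}) (hb : b + 1 < lam),
        𝒟 (Φ.seq.map b (b + 1) (le_self_add (a := b) (b := 1)) hb)) ∧
      Φ.seq.obj 0 h0 = A ∧ Φ.cocone.pt = L ∧ HEq (Φ.cocone.ι 0 h0) h

/-- `ret(𝒞)`: retracts of transfinite compositions of pushouts of maps in `𝒞`. -/
def retClass (𝒞 : MapClass S) : MapClass S :=
  fun {A _} g => ∃ (B : SAct S) (f : SMap A B),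
    IsTransfiniteCompOf (pushoutsOf 𝒞) f ∧ RetractOfMap g f

/-- The class of pure epimorphisms. -/
def PureEpiClass (S : Type u) [Monoid S] : MapClass S := fun {_ _} f => IsPureEpi f

/-- The subact `{z}` of `S`, for a left zero `z`. -/
def zSub (z : S) (hz : ∀ s : S, z * s = z) : SAct S :=
  (regAct S).sub {z} (fun t ht s => by
    obtain rfl : t = z := ht
    exact hz s)

/-- The inclusion `{z} → S`, for a left zero `z`. -/
def zIncl (z : S) (hz : ∀ s : S, z * s = z) : SMap (zSub z hz) (regAct S) :=
  ⟨fun t => t.1, fun _ _ => rfl⟩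

/-- The subact `K_d = g⁻¹(d)` of `C`, for a fixed point `d` of `D`. -/
def kerAct {C D : SAct S} (g : SMap C D) (d : D.carrier) (hd : d ∈ FixSet D) : SAct S :=
  C.sub {c | g.toFun c = d} (fun c hc s => by
    simp only [Set.mem_setOf_eq] at hc ⊢
    rw [g.map_act, hc]
    exact hd s)

/-- A centred `S`-act: an act with exactly one fixed point. -/
def CAct (S : Type u) [Monoid S] : Type (u + 1) :=
  {A : SAct S // ∃! a : A.carrier, ∀ s : S, A.act a s = a}

/-- A class of maps of centred `S`-acts. -/
abbrev MapClassC (S : Type u) [Monoid S] : Type (u + 1) :=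
  ∀ (A B : CAct S), SMap A.1 B.1 → Prop

/-- `C^□` in the category of centred `S`-acts. -/
def rlpCC (𝒞 : MapClassC S) : MapClassC S :=
  fun _ _ g => ∀ (X Y : CAct S) (f : SMap X.1 Y.1), 𝒞 X Y f → Lifts f g

/-- `□C` in the category of centred `S`-acts. -/
def llpCC (𝒞 : MapClassC S) : MapClassC S :=
  fun _ _ f => ∀ (X Y : CAct S) (g : SMap X.1 Y.1), 𝒞 X Y g → Lifts f g

/-- A weak factorization system in the category of centred `S`-acts. -/
structure IsWFSC (L R : MapClassC S) : Prop where
  rlp_eq : ∀ (A B : CAct S) (g : SMap A.1 B.1), R A B g ↔ rlpCC L A B g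
  llp_eq : ∀ (A B : CAct S) (f : SMap A.1 B.1), L A B f ↔ llpCC R A B f
  factor : ∀ (A B : CAct S) (h : SMap A.1 B.1),
    ∃ (C : CAct S) (f : SMap A.1 C.1) (g : SMap C.1 B.1), L A C f ∧ R C B g ∧ g.comp f = h

/-- The one-element centred `S`-act `0`. -/
def oneCAct (S : Type u) [Monoid S] : CAct S :=
  ⟨oneAct S, PUnit.unit, fun _ => rfl, fun _ _ => rfl⟩

/-- The unique map `0 → X` of centred `S`-acts. -/
noncomputable def zeroTo (X : CAct S) : SMap (oneCAct S).1 X.1 :=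
  ⟨fun _ => X.2.choose, fun _ s => (X.2.choose_spec.1 s).symm⟩

/-! ### Auxiliary development for the small object argument -/

theorem SMap.ext_ {S : Type u} [Monoid S] {A B : SAct S} {f g : SMap A B}
    (h : ∀ a, f.toFun a = g.toFun a) : f = g := by
  cases f; cases g
  simp only [SMap.mk.injEq]
  exact funext h

/-- Bundled data for the one-step free factorization. -/
structure SOASetup (S : Type u) [Monoid S] : Type (u + 1) where
  idx : Type u
  Xi : idx → SAct S
  Yi : idx → SAct S
  ci : ∀ i, SMap (Xi i) (Yi i)
  A : SAct S
  B : SAct S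
  h : SMap A B

namespace SOASetup

variable {S : Type u} [Monoid S]

/-- Raw terms of the factorization object. -/
inductive Pre (E : SOASetup S) : Type u
  | ofA : E.A.carrier → Pre E
  | cell (i : E.idx) (u : (E.Xi i).carrier → Pre E) (b : SMap (E.Yi i) E.B)
      (y : (E.Yi i).carrier) : Pre E

variable {E : SOASetup S}

/-- The raw action. -/
def actP (E : SOASetup S) : Pre E → S → Pre E
  | .ofA a, s => .ofA (E.A.act a s)
  | .cell i u b y, s => .cell i u b ((E.Yi i).act y s)

theorem actP_one (p : Pre E) : actP E p 1 = p := by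
  cases p with
  | ofA a => exact congrArg Pre.ofA (E.A.act_one a)
  | cell i u b y => exact congrArg (Pre.cell i u b) ((E.Yi i).act_one y)

theorem actP_mul (p : Pre E) (s t : S) : actP E (actP E p s) t = actP E p (s * t) := by
  cases p with
  | ofA a => exact congrArg Pre.ofA (E.A.act_mul a s t)
  | cell i u b y => exact congrArg (Pre.cell i u b) ((E.Yi i).act_mul y s t)

/-- The raw map to `B`. -/
def g0 (E : SOASetup S) : Pre E → E.B.carrier
  | .ofA a => E.h.toFun a
  | .cell _ _ b y => b.toFun y

theorem g0_act (p : Pre E) (s : S) : g0 E (actP E p s) = E.B.act (g0 E p) s := by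
  cases p with
  | ofA a => exact E.h.map_act a s
  | cell i u b y => exact b.map_act y s

mutual
/-- Well-formed terms. -/
inductive Good (E : SOASetup S) : Pre E → Type u
  | ofA (a : E.A.carrier) : Good E (.ofA a)
  | cell (i : E.idx) (u : (E.Xi i).carrier → Pre E) (b : SMap (E.Yi i) E.B)
      (y : (E.Yi i).carrier)
      (gu : ∀ x, Good E (u x))
      (geq : ∀ x s, Rel E (u ((E.Xi i).act x s)) (actP E (u x) s))
      (gval : ∀ x, g0 E (u x) = b.toFun ((E.ci i).toFun x)) :
      Good E (.cell i u b y)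

/-- The defining relations. -/
inductive Rel (E : SOASetup S) : Pre E → Pre E → Type u
  | refl (p : Pre E) : Rel E p p
  | symm {p q : Pre E} : Rel E p q → Rel E q p
  | trans {p q r : Pre E} : Rel E p q → Rel E q r → Rel E p r
  | glue (i : E.idx) (u : (E.Xi i).carrier → Pre E) (b : SMap (E.Yi i) E.B)
      (gu : ∀ x, Good E (u x))
      (geq : ∀ x s, Rel E (u ((E.Xi i).act x s)) (actP E (u x) s))
      (gval : ∀ x, g0 E (u x) = b.toFun ((E.ci i).toFun x))
      (x : (E.Xi i).carrier) (s : S)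
      (y : (E.Yi i).carrier) (hy : y = (E.Yi i).act ((E.ci i).toFun x) s)
      (q : Pre E) (hq : q = actP E (u x) s) :
      Rel E (.cell i u b y) q
end

end SOASetup
namespace SOASetup

variable {S : Type u} [Monoid S] {E : SOASetup S}

/-- Goodness is preserved by the action. -/
def goodAct (s : S) : ∀ {p : Pre E}, Good E p → Good E (actP E p s)
  | _, .ofA a => .ofA (E.A.act a s)
  | _, .cell i u b y gu geq gval => .cell i u b ((E.Yi i).act y s) gu geq gval

/-- The relation is stable under the action. -/
def relAct (t : S) : ∀ {p q : Pre E}, Rel E p q → Rel E (actP E p t) (actP E q t)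
  | _, _, .refl p => .refl (actP E p t)
  | _, _, .symm d => .symm (relAct t d)
  | _, _, .trans d₁ d₂ => .trans (relAct t d₁) (relAct t d₂)
  | _, _, .glue i u b gu geq gval x s y hy q hq =>
      .glue i u b gu geq gval x (s * t) ((E.Yi i).act y t)
        (by rw [hy, (E.Yi i).act_mul]) (actP E q t) (by rw [hq, actP_mul])

/-- The relation preserves goodness (in both directions). -/
def relGood : ∀ {p q : Pre E}, Rel E p q → ((Good E p → Good E q) × (Good E q → Good E p))
  | _, _, .refl p => ⟨id, id⟩
  | _, _, .symm d => (relGood d).swap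
  | _, _, .trans d₁ d₂ => ⟨(relGood d₂).1 ∘ (relGood d₁).1, (relGood d₁).2 ∘ (relGood d₂).2⟩
  | _, _, .glue i u b gu geq gval x s y hy q hq =>
      ⟨fun _ => by rw [hq]; exact goodAct s (gu x),
       fun _ => .cell i u b y gu geq gval⟩

/-- The relation is compatible with the map to `B`. -/
theorem g0_rel : ∀ {p q : Pre E}, Rel E p q → g0 E p = g0 E q
  | _, _, .refl p => rfl
  | _, _, .symm d => (g0_rel d).symm
  | _, _, .trans d₁ d₂ => (g0_rel d₁).trans (g0_rel d₂)
  | _, _, .glue i u b gu geq gval x s y hy q hq => by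
      subst hy; subst hq
      show b.toFun _ = g0 E (actP E (u x) s)
      rw [g0_act, b.map_act, gval x]

end SOASetup
namespace SOASetup

variable {S : Type u} [Monoid S] {E : SOASetup S}

/-- Well-formed terms, bundled. -/
def GoodPre (E : SOASetup S) : Type u := {p : Pre E // Nonempty (Good E p)}

instance goodSetoid (E : SOASetup S) : Setoid (GoodPre E) where
  r p q := Nonempty (Rel E p.1 q.1)
  iseqv := ⟨fun p => ⟨.refl p.1⟩, fun ⟨d⟩ => ⟨.symm d⟩, fun ⟨d⟩ ⟨e⟩ => ⟨.trans d e⟩⟩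

/-- The middle object of the factorization. -/
def PAct (E : SOASetup S) : SAct S where
  carrier := Quotient (goodSetoid E)
  act p s := Quotient.lift
      (fun p : GoodPre E => (⟦⟨actP E p.1 s, p.2.map (goodAct s)⟩⟧ : Quotient (goodSetoid E)))
      (fun p q hpq => Quotient.sound (Nonempty.map (relAct s) hpq)) p
  act_one p := by
    induction p using Quotient.ind with
    | _ p => exact congrArg (Quotient.mk _) (Subtype.ext (actP_one p.1))
  act_mul p s t := by
    induction p using Quotient.ind with
    | _ p => exact congrArg (Quotient.mk _) (Subtype.ext (actP_mul p.1 s t))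

/-- The left map of the factorization. -/
def fMap (E : SOASetup S) : SMap E.A (PAct E) where
  toFun a := Quotient.mk _ ⟨.ofA a, ⟨.ofA a⟩⟩
  map_act a s := Quotient.sound ⟨.refl _⟩

/-- The right map of the factorization. -/
def gMap (E : SOASetup S) : SMap (PAct E) E.B where
  toFun := Quotient.lift (fun p : GoodPre E => g0 E p.1) (fun p q ⟨d⟩ => g0_rel d)
  map_act p s := by
    induction p using Quotient.ind with
    | _ p => exact g0_act p.1 s

theorem g_comp_f (E : SOASetup S) : (gMap E).comp (fMap E) = E.h :=
  SMap.ext_ fun _ => rfl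

/-- The plain gluing relation. -/
def glue1 (i : E.idx) (u : (E.Xi i).carrier → Pre E) (b : SMap (E.Yi i) E.B)
    (gu : ∀ x, Good E (u x))
    (geq : ∀ x s, Rel E (u ((E.Xi i).act x s)) (actP E (u x) s))
    (gval : ∀ x, g0 E (u x) = b.toFun ((E.ci i).toFun x))
    (x : (E.Xi i).carrier) :
    Rel E (.cell i u b ((E.ci i).toFun x)) (u x) :=
  .glue i u b gu geq gval x 1 _ ((E.Yi i).act_one _).symm (u x) (actP_one (u x)).symm

/-- The right map has the right lifting property with respect to each `ci`. -/
theorem gMap_rlp (E : SOASetup S) (i : E.idx) : Lifts (E.ci i) (gMap E) := by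
  intro u v hsq
  have hrep := fun x => Quotient.exists_rep (u.toFun x)
  choose rep hrep using hrep
  set w : (E.Xi i).carrier → Pre E := fun x => (rep x).1 with hw
  have gu : ∀ x, Good E (w x) := fun x => (rep x).2.some
  have geq : ∀ x s, Rel E (w ((E.Xi i).act x s)) (actP E (w x) s) := by
    intro x s
    refine (Quotient.exact (?_ : (⟦rep ((E.Xi i).act x s)⟧ : Quotient (goodSetoid E)) =
      ⟦⟨actP E (w x) s, (rep x).2.map (goodAct s)⟩⟧)).some
    rw [hrep]
    have := u.map_act x s
    rw [this, ← hrep x]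
    rfl
  have gval : ∀ x, g0 E (w x) = v.toFun ((E.ci i).toFun x) := by
    intro x
    have h1 : (gMap E).toFun (u.toFun x) = v.toFun ((E.ci i).toFun x) :=
      congrFun (congrArg SMap.toFun hsq) x
    rw [← hrep x] at h1
    exact h1
  refine ⟨⟨fun y => Quotient.mk _ ⟨.cell i w v y, ⟨.cell i w v y gu geq gval⟩⟩,
    fun y s => Quotient.sound ⟨.refl _⟩⟩, SMap.ext_ fun x => ?_, SMap.ext_ fun y => rfl⟩
  show (⟦⟨Pre.cell i w v ((E.ci i).toFun x), _⟩⟧ : Quotient (goodSetoid E)) = u.toFun x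
  rw [← hrep x]
  exact Quotient.sound ⟨glue1 i w v gu geq gval x⟩

end SOASetup
namespace SOASetup

section LiftSection

variable {S : Type u} [Monoid S] {E : SOASetup S}
variable {C' D' : SAct S}

/-- The bottom map of the lifting problem associated to a cell. -/
def vbOf (v' : SMap (PAct E) D') (i : E.idx) (w : (E.Xi i).carrier → Pre E)
    (b : SMap (E.Yi i) E.B)
    (gne : ∀ y, Nonempty (Good E (.cell i w b y))) : SMap (E.Yi i) D' where
  toFun y := v'.toFun (Quotient.mk _ ⟨.cell i w b y, gne y⟩)
  map_act y s := v'.map_act (Quotient.mk _ ⟨.cell i w b y, gne y⟩) s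

/-- The lifting condition for a cell. -/
def Cnd (g' : SMap C' D') (i : E.idx) (t : (E.Xi i).carrier → C'.carrier)
    (vb : SMap (E.Yi i) D') : Prop :=
  ∃ ℓ : SMap (E.Yi i) C', (∀ x, ℓ.toFun ((E.ci i).toFun x) = t x) ∧ g'.comp ℓ = vb

theorem cnd_of_empty (g' : SMap C' D') (hg' : ∀ i, Lifts (E.ci i) g')
    (i : E.idx) (t : (E.Xi i).carrier → C'.carrier) (vb : SMap (E.Yi i) D')
    (hne : ¬ Nonempty (E.Xi i).carrier) : Cnd g' i t vb := by
  obtain ⟨ℓ, h1, h2⟩ := hg' i ⟨fun x => (hne ⟨x⟩).elim, fun x _ => (hne ⟨x⟩).elim⟩ vb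
    (SMap.ext_ fun x => (hne ⟨x⟩).elim)
  exact ⟨ℓ, fun x => (hne ⟨x⟩).elim, h2⟩

open Classical in
/-- The value of the lift at a cell. -/
noncomputable def cellVal (g' : SMap C' D') (hg' : ∀ i, Lifts (E.ci i) g')
    (i : E.idx) (t : (E.Xi i).carrier → C'.carrier)
    (vb : SMap (E.Yi i) D') (y : (E.Yi i).carrier) : C'.carrier :=
  if hc : Cnd g' i t vb then (Classical.choose hc).toFun y
  else if hne : Nonempty (E.Xi i).carrier then t hne.some
  else absurd (cnd_of_empty g' hg' i t vb hne) hc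

variable (g' : SMap C' D') (hg' : ∀ i, Lifts (E.ci i) g')
variable (u' : SMap E.A C') (v' : SMap (PAct E) D')

/-- The raw lift. -/
noncomputable def k0 : ∀ {p : Pre E}, Good E p → C'.carrier
  | _, .ofA a => u'.toFun a
  | _, .cell i w b y gu geq gval =>
      cellVal g' hg' i (fun x => k0 (gu x))
        (vbOf v' i w b (fun y' => ⟨.cell i w b y' gu geq gval⟩)) y

theorem k0_irrel : ∀ {p : Pre E} (G G' : Good E p),
    k0 g' hg' u' v' G = k0 g' hg' u' v' G'
  | _, .ofA a, .ofA _ => rfl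
  | _, .cell i w b y gu geq gval, .cell _ _ _ _ gu' geq' gval' => by
    simp only [k0]
    have ht : (fun x => k0 g' hg' u' v' (gu x)) = fun x => k0 g' hg' u' v' (gu' x) :=
      funext fun x => k0_irrel (gu x) (gu' x)
    rw [ht]

end LiftSection

end SOASetup
namespace SOASetup

section MainSection

variable {S : Type u} [Monoid S] {E : SOASetup S} {C' D' : SAct S}

theorem cellKey (g' : SMap C' D') (hg' : ∀ i, Lifts (E.ci i) g')
    (u' : SMap E.A C') (v' : SMap (PAct E) D')
    (i : E.idx) (w : (E.Xi i).carrier → Pre E) (b : SMap (E.Yi i) E.B)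
    (gu : ∀ x, Good E (w x))
    (geq : ∀ x s, Rel E (w ((E.Xi i).act x s)) (actP E (w x) s))
    (gval : ∀ x, g0 E (w x) = b.toFun ((E.ci i).toFun x))
    (ht : ∀ x s, k0 g' hg' u' v' (gu ((E.Xi i).act x s)) = C'.act (k0 g' hg' u' v' (gu x)) s)
    (hV : ∀ x, g'.toFun (k0 g' hg' u' v' (gu x))
      = v'.toFun (Quotient.mk _ ⟨w x, ⟨gu x⟩⟩)) :
    ∃ ℓ : SMap (E.Yi i) C',
      (∀ (y'' : (E.Yi i).carrier) (G'' : Good E (.cell i w b y'')),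
        k0 g' hg' u' v' G'' = ℓ.toFun y'') ∧
      (∀ x, ℓ.toFun ((E.ci i).toFun x) = k0 g' hg' u' v' (gu x)) ∧
      g'.comp ℓ = vbOf v' i w b (fun y' => ⟨.cell i w b y' gu geq gval⟩) := by
  have comm : g'.comp ⟨fun x => k0 g' hg' u' v' (gu x), ht⟩
      = (vbOf v' i w b (fun y' => ⟨.cell i w b y' gu geq gval⟩)).comp (E.ci i) := by
    refine SMap.ext_ fun x => ?_
    show g'.toFun (k0 g' hg' u' v' (gu x)) = v'.toFun (Quotient.mk _ _)
    rw [hV x]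
    exact congrArg v'.toFun (Quotient.sound ⟨.symm (glue1 i w b gu geq gval x)⟩)
  obtain ⟨ℓ, h1, h2⟩ := hg' i _ _ comm
  have hcnd : Cnd g' i (fun x => k0 g' hg' u' v' (gu x))
      (vbOf v' i w b (fun y' => ⟨.cell i w b y' gu geq gval⟩)) :=
    ⟨ℓ, fun x => congrFun (congrArg SMap.toFun h1) x, h2⟩
  refine ⟨Classical.choose hcnd, ?_, (Classical.choose_spec hcnd).1,
    (Classical.choose_spec hcnd).2⟩
  intro y'' G''
  have hk : k0 g' hg' u' v' (Good.cell i w b y'' gu geq gval)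
      = (Classical.choose hcnd).toFun y'' := by
    simp only [k0, cellVal]
    rw [dif_pos hcnd]
  exact (k0_irrel g' hg' u' v' G'' (.cell i w b y'' gu geq gval)).trans hk

mutual

theorem mainG (g' : SMap C' D') (hg' : ∀ i, Lifts (E.ci i) g')
    (u' : SMap E.A C') (v' : SMap (PAct E) D')
    (hsq : g'.comp u' = v'.comp (fMap E)) :
    ∀ {p : Pre E} (G : Good E p),
      (∀ (s : S) (G' : Good E (actP E p s)),
        k0 g' hg' u' v' G' = C'.act (k0 g' hg' u' v' G) s) ∧
      g'.toFun (k0 g' hg' u' v' G) = v'.toFun (Quotient.mk _ ⟨p, ⟨G⟩⟩)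
  | _, .ofA a => by
    constructor
    · intro s G'
      cases G' with
      | ofA _ => exact u'.map_act a s
    · exact congrFun (congrArg SMap.toFun hsq) a
  | _, .cell i w b y gu geq gval => by
    have ht : ∀ x s, k0 g' hg' u' v' (gu ((E.Xi i).act x s))
        = C'.act (k0 g' hg' u' v' (gu x)) s := fun x s =>
      (mainR g' hg' u' v' hsq (geq x s) (gu _) (goodAct s (gu x))).trans
        ((mainG g' hg' u' v' hsq (gu x)).1 s (goodAct s (gu x)))
    have hV : ∀ x, g'.toFun (k0 g' hg' u' v' (gu x))
        = v'.toFun (Quotient.mk _ ⟨w x, ⟨gu x⟩⟩) := fun x =>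
      (mainG g' hg' u' v' hsq (gu x)).2
    obtain ⟨ℓ, hk, hbd, hgl⟩ := cellKey g' hg' u' v' i w b gu geq gval ht hV
    constructor
    · intro s G'
      have h1 : k0 g' hg' u' v' G' = ℓ.toFun ((E.Yi i).act y s) := hk _ G'
      rw [h1, hk y (.cell i w b y gu geq gval)]
      exact ℓ.map_act y s
    · rw [hk y (.cell i w b y gu geq gval)]
      exact congrFun (congrArg SMap.toFun hgl) y

theorem mainR (g' : SMap C' D') (hg' : ∀ i, Lifts (E.ci i) g')
    (u' : SMap E.A C') (v' : SMap (PAct E) D')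
    (hsq : g'.comp u' = v'.comp (fMap E)) :
    ∀ {p q : Pre E} (_ : Rel E p q) (Gp : Good E p) (Gq : Good E q),
      k0 g' hg' u' v' Gp = k0 g' hg' u' v' Gq
  | _, _, .refl _, Gp, Gq => k0_irrel g' hg' u' v' Gp Gq
  | _, _, .symm d, Gp, Gq => (mainR g' hg' u' v' hsq d Gq Gp).symm
  | _, _, .trans d₁ d₂, Gp, Gq =>
    (mainR g' hg' u' v' hsq d₁ Gp ((relGood d₁).1 Gp)).trans
      (mainR g' hg' u' v' hsq d₂ ((relGood d₁).1 Gp) Gq)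
  | _, _, .glue i w b gu geq gval x s y hy q hq, Gp, Gq => by
    subst hy; subst hq
    have ht : ∀ x s, k0 g' hg' u' v' (gu ((E.Xi i).act x s))
        = C'.act (k0 g' hg' u' v' (gu x)) s := fun x s =>
      (mainR g' hg' u' v' hsq (geq x s) (gu _) (goodAct s (gu x))).trans
        ((mainG g' hg' u' v' hsq (gu x)).1 s (goodAct s (gu x)))
    have hV : ∀ x, g'.toFun (k0 g' hg' u' v' (gu x))
        = v'.toFun (Quotient.mk _ ⟨w x, ⟨gu x⟩⟩) := fun x =>
      (mainG g' hg' u' v' hsq (gu x)).2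
    obtain ⟨ℓ, hk, hbd, hgl⟩ := cellKey g' hg' u' v' i w b gu geq gval ht hV
    rw [hk _ Gp]
    have h2 : k0 g' hg' u' v' Gq = C'.act (k0 g' hg' u' v' (gu x)) s :=
      (mainG g' hg' u' v' hsq (gu x)).1 s Gq
    rw [h2, ← hbd x, ← ℓ.map_act]

end

end MainSection

end SOASetup
namespace SOASetup

variable {S : Type u} [Monoid S] {E : SOASetup S} {C' D' : SAct S}

/-- The left map lifts against any map with the right lifting property. -/
theorem exists_lift (g' : SMap C' D') (hg' : ∀ i, Lifts (E.ci i) g')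
    (u' : SMap E.A C') (v' : SMap (PAct E) D')
    (hsq : g'.comp u' = v'.comp (fMap E)) :
    ∃ k : SMap (PAct E) C', k.comp (fMap E) = u' ∧ g'.comp k = v' := by
  have hofA : ∀ a, k0 g' hg' u' v' (Good.ofA (E := E) a) = u'.toFun a := by
    intro a; simp only [k0]
  refine ⟨⟨Quotient.lift (fun p : GoodPre E => k0 g' hg' u' v' p.2.some)
    (fun p q hpq => mainR g' hg' u' v' hsq hpq.some p.2.some q.2.some), ?_⟩, ?_, ?_⟩
  · intro p s
    induction p using Quotient.ind with
    | _ p => exact (mainG g' hg' u' v' hsq p.2.some).1 s _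
  · refine SMap.ext_ fun a => ?_
    exact (k0_irrel g' hg' u' v' _ (.ofA a)).trans (hofA a)
  · refine SMap.ext_ fun p => ?_
    induction p using Quotient.ind with
    | _ p => exact (mainG g' hg' u' v' hsq p.2.some).2

end SOASetup
theorem statement17' {S : Type u} [Monoid S] (𝒞 : MapClass S)
    (hsmall : Small.{u} {a : ArrowCls S // 𝒞 a.2.2}) :
    IsWFS (llpC (rlpC 𝒞)) (rlpC 𝒞) := by
  refine { rlp_eq := fun {A B} g => ?_, llp_eq := fun {A B} f => Iff.rfl, factor := ?_ }
  · constructor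
    · intro hg X Y f hf
      exact hf g hg
    · intro hg X Y f hf
      exact hg f (fun {C' D} g'' hg'' => hg'' f hf)
  · intro A B h
    haveI := hsmall
    let e := equivShrink {a : ArrowCls S // 𝒞 a.2.2}
    let E : SOASetup S :=
      { idx := Shrink {a : ArrowCls S // 𝒞 a.2.2},
        Xi := fun i => ((e.symm i).1).1,
        Yi := fun i => ((e.symm i).1).2.1,
        ci := fun i => ((e.symm i).1).2.2,
        A := A, B := B, h := h }
    refine ⟨SOASetup.PAct E, SOASetup.fMap E, SOASetup.gMap E, ?_, ?_, SOASetup.g_comp_f E⟩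
    · intro C' D' g' hg' u' v' hsq
      exact SOASetup.exists_lift g' (fun i => hg' (E.ci i) ((e.symm i).2)) u' v' hsq
    · intro X Y f hf
      have h1 : Lifts ((e.symm (e ⟨⟨X, ⟨Y, f⟩⟩, hf⟩)).1.2.2) (SOASetup.gMap E) :=
        SOASetup.gMap_rlp E (e ⟨⟨X, ⟨Y, f⟩⟩, hf⟩)
      have h2 : e.symm (e ⟨⟨X, ⟨Y, f⟩⟩, hf⟩) = ⟨⟨X, ⟨Y, f⟩⟩, hf⟩ := e.symm_apply_apply _
      rw [h2] at h1
      exact h1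

theorem statement17 (𝒞 : MapClass S)
    (hsmall : Small.{u} {a : ArrowCls S // 𝒞 a.2.2})
    (hcop : ∀ (ι : Type u) (A B : ι → SAct S) (f : ∀ i, SMap (A i) (B i)),
      (∀ i, 𝒞 (f i)) → 𝒞 (coprodMap f)) :
    IsWFS (llpC (rlpC 𝒞)) (rlpC 𝒞) := by
  exact statement17' 𝒞 hsmall
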